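/- Let $I \subseteq \mathbb{R}$ be an open interval, $X \in \mathbb{R}$ a constant, and $\varphi : I \to \mathbb{R}$ a differentiable function with $1 + t + \varphi(t) > 0$ for all $t \in I$, satisfying the implicit equation $(1 + t + \varphi)\log(1 + t + \varphi) = 2\varphi + t - X(1 + t + \varphi)$ on $I$. Then $\varphi$ satisfies the differential equation $(1 - \varphi)\varphi' = 2\varphi + t$ on $I$. -/

import Mathlib

/-- on an open interval, a differentiable solution of the implicit equation
`(1+t+φ)log(1+t+φ) = 2φ + t - X(1+t+φ)` satisfies `(1-φ)φ' = 2φ + t`. -/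
theorem stmt_10 (a b : ℝ) (Xc : ℝ) (φ : ℝ → ℝ)
    (hdiff : ∀ t ∈ Set.Ioo a b, DifferentiableAt ℝ φ t)
    (hpos : ∀ t ∈ Set.Ioo a b, 0 < 1 + t + φ t)
    (heq : ∀ t ∈ Set.Ioo a b,
      (1 + t + φ t) * Real.log (1 + t + φ t) = 2 * φ t + t - Xc * (1 + t + φ t)) :
    ∀ t ∈ Set.Ioo a b, (1 - φ t) * deriv φ t = 2 * φ t + t := by
  intro t ht
  have hI : Set.Ioo a b ∈ nhds t := Ioo_mem_nhds ht.1 ht.2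
  set u : ℝ := 1 + t + φ t with hu
  have hu0 : 0 < u := hpos t ht
  have hd : HasDerivAt φ (deriv φ t) t := (hdiff t ht).hasDerivAt
  have hU : HasDerivAt (fun s => 1 + s + φ s) (1 + deriv φ t) t := by
    have h := ((hasDerivAt_id t).const_add 1).add hd
    exact h
  have hlog : HasDerivAt (fun s => Real.log (1 + s + φ s)) ((1 + deriv φ t) / u) t := by
    have := (Real.hasDerivAt_log hu0.ne').comp t hU
    rw [div_eq_inv_mul]
    exact this
  have hf : HasDerivAt (fun s => (1 + s + φ s) * Real.log (1 + s + φ s))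
      ((1 + deriv φ t) * Real.log u + u * ((1 + deriv φ t) / u)) t := hU.mul hlog
  have hg : HasDerivAt (fun s => 2 * φ s + s - Xc * (1 + s + φ s))
      (2 * deriv φ t + 1 - Xc * (1 + deriv φ t)) t := by
    have h := ((hd.const_mul 2).add (hasDerivAt_id t)).sub (hU.const_mul Xc)
    exact h
  have heq' : (fun s => (1 + s + φ s) * Real.log (1 + s + φ s))
      =ᶠ[nhds t] fun s => 2 * φ s + s - Xc * (1 + s + φ s) :=
    Filter.eventuallyEq_of_mem hI (fun s hs => heq s hs)
  have hderiv_eq : (1 + deriv φ t) * Real.log u + u * ((1 + deriv φ t) / u)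
      = 2 * deriv φ t + 1 - Xc * (1 + deriv φ t) := by
    rw [← hf.deriv, ← hg.deriv, Filter.EventuallyEq.deriv_eq heq']
  have hlogval : Real.log u = (2 * φ t + t - Xc * u) / u := by
    rw [eq_div_iff hu0.ne', mul_comm]
    exact heq t ht
  rw [hlogval] at hderiv_eq
  have hne : u ≠ 0 := hu0.ne'
  field_simp at hderiv_eq
  rw [hu] at hderiv_eq
  linear_combination -hderiv_eq
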